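/- Let M be a pointed metric space, let Λ be a positive bounded linear functional on ℓ∞(M̃) with ‖Λ∘Φ‖ = ‖Λ‖ = 1, let α > 0, let f belong to the slice S(Λ∘Φ, α²) of the unit ball of Lip_0(M), and let A = {(x,y) ∈ M̃ : f(m_{x,y}) ≥ 1−α}. Then Λ(A) ≥ 1−α. -/

import Mathlib

open scoped ENNReal

/-- The set `M̃ = {(x,y) : x ≠ y}` as a subtype. -/
def Mt (M : Type*) : Type _ := {p : M × M // p.1 ≠ p.2}

variable {M : Type*} [MetricSpace M]

/-- `ℓ∞(M̃)`. -/
noncomputable abbrev ellInfty (M : Type*) : Type _ := ↥(lp (fun _ : Mt M => ℝ) ∞)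

/-- A bounded linear functional on `ℓ∞(M̃)` is positive if it is nonnegative on
nonnegative functions. -/
def IsPositive {M : Type*} (Λ : ellInfty M →L[ℝ] ℝ) : Prop :=
  ∀ h : ellInfty M, (∀ p : Mt M, 0 ≤ h p) → 0 ≤ Λ h

/-- The indicator function of `A ⊆ M̃` as an element of `ℓ∞(M̃)`. -/
noncomputable def indicLp {M : Type*} (A : Set (Mt M)) : ellInfty M :=
  ⟨A.indicator 1, memℓp_infty (by
    refine ⟨1, ?_⟩
    rintro r ⟨p, rfl⟩
    by_cases hp : p ∈ A <;>
      simp [Set.indicator_apply, hp])⟩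

/-- The image of `Lip₀(M)` in `ℓ∞(M̃)` under the de Leeuw embedding `Φ`;
`Lip₀(M)` itself is identified with this submodule, carrying the induced
(Lipschitz) norm, and `Φ` is then the inclusion `(LipO M base).subtypeL`. -/
noncomputable def LipO (M : Type*) [MetricSpace M] (base : M) :
    Submodule ℝ (ellInfty M) where
  carrier := {g | ∃ f : M → ℝ, f base = 0 ∧
    ∀ p : Mt M, g p = (f p.1.1 - f p.1.2) / dist p.1.1 p.1.2}
  add_mem' := by
    rintro g₁ g₂ ⟨f₁, hf₁, h₁⟩ ⟨f₂, hf₂, h₂⟩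
    refine ⟨f₁ + f₂, by simp [hf₁, hf₂], fun p => ?_⟩
    have : (⇑(g₁ + g₂) : Mt M → ℝ) = ⇑g₁ + ⇑g₂ := lp.coeFn_add g₁ g₂
    rw [this]
    simp only [Pi.add_apply, h₁ p, h₂ p]
    ring
  zero_mem' := by
    refine ⟨0, rfl, fun p => ?_⟩
    have : (⇑(0 : ellInfty M) : Mt M → ℝ) = 0 := lp.coeFn_zero _ _
    simp [this]
  smul_mem' := by
    rintro c g ⟨f, hf, h⟩
    refine ⟨c • f, by simp [hf], fun p => ?_⟩
    have : (⇑(c • g) : Mt M → ℝ) = c • ⇑g := lp.coeFn_smul c g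
    rw [this]
    simp only [Pi.smul_apply, smul_eq_mul, h p]
    ring

open Classical in
/-- Evaluation of (the function represented by) `g ∈ Lip₀(M)` at `x`. -/
noncomputable def evalAux (base x : M) (g : ↥(LipO M base)) : ℝ :=
  if h : x = base then 0
  else ((g : ellInfty M) : Mt M → ℝ) ⟨(x, base), h⟩ * dist x base

/-- The evaluation functional `δ_x : Lip₀(M) → ℝ`, `δ_x(f) = f(x)`
(recovering `f` from its de Leeuw transform). -/
noncomputable def deltaF (base x : M) : ↥(LipO M base) →L[ℝ] ℝ :=
  LinearMap.mkContinuous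
    { toFun := evalAux base x
      map_add' := fun g₁ g₂ => by
        unfold evalAux
        split_ifs with h
        · simp
        · simp only [Submodule.coe_add, lp.coeFn_add, Pi.add_apply]
          erw [Pi.add_apply]
          ring
      map_smul' := fun c g => by
        unfold evalAux
        split_ifs with h
        · simp
        · simp only [Submodule.coe_smul, lp.coeFn_smul, Pi.smul_apply,
            smul_eq_mul, RingHom.id_apply]
          erw [Pi.smul_apply, smul_eq_mul]
          ring }
    (dist x base)
    (by
      intro g
      simp only [LinearMap.coe_mk, AddHom.coe_mk]
      unfold evalAux
      split_ifs with h
      · subst h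
        rw [norm_zero, dist_self, zero_mul]
      · have h1 : ‖((g : ellInfty M) : Mt M → ℝ) ⟨(x, base), h⟩‖ ≤ ‖(g : ellInfty M)‖ :=
          lp.norm_apply_le_norm ENNReal.top_ne_zero (g : ellInfty M) ⟨(x, base), h⟩
        have h2 : ‖(g : ellInfty M)‖ = ‖g‖ := rfl
        calc ‖((g : ellInfty M) : Mt M → ℝ) ⟨(x, base), h⟩ * dist x base‖
            = ‖((g : ellInfty M) : Mt M → ℝ) ⟨(x, base), h⟩‖ * dist x base := by
              rw [norm_mul, Real.norm_eq_abs (dist x base), abs_of_nonneg dist_nonneg]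
          _ ≤ ‖g‖ * dist x base := by
              exact mul_le_mul_of_nonneg_right (h2 ▸ h1) dist_nonneg
          _ = dist x base * ‖g‖ := mul_comm _ _)

/-- The Lipschitz-free space `F(M)`: the closed linear span of the evaluation
functionals inside the dual of `Lip₀(M)`. -/
noncomputable def FreeSpan (M : Type*) [MetricSpace M] (base : M) :
    Submodule ℝ (↥(LipO M base) →L[ℝ] ℝ) :=
  Submodule.span ℝ (Set.range (deltaF base))

/-- The Lipschitz-free space `F(M)`: the closed linear span of the evaluation
functionals inside the dual of `Lip₀(M)`. -/
noncomputable def FreeSp (M : Type*) [MetricSpace M] (base : M) :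
    Set (↥(LipO M base) →L[ℝ] ℝ) :=
  closure (FreeSpan M base : Set (↥(LipO M base) →L[ℝ] ℝ))

/-- The weak-star topology `σ(Lip₀(M), F(M))` on `Lip₀(M)`. -/
noncomputable def wstar (M : Type*) [MetricSpace M] (base : M) :
    TopologicalSpace ↥(LipO M base) :=
  TopologicalSpace.induced
    (fun g => fun μ : FreeSp M base => (μ : ↥(LipO M base) →L[ℝ] ℝ) g)
    inferInstance

variable {M : Type*} [MetricSpace M]

/-- The de Leeuw quotient `f(m_{x,y}) = (f x - f y)/d(x,y)`. -/
noncomputable def mQ (f : M → ℝ) (p : Mt M) : ℝ :=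
  (f p.1.1 - f p.1.2) / dist p.1.1 p.1.2

/-- `A ⊆ M̃` is `γ`-cyclically monotonic. -/
def GammaCM (γ : ℝ) (A : Set (Mt M)) : Prop :=
  ∀ (n : ℕ) (p : Fin (n + 1) → Mt M), (∀ i, p i ∈ A) →
    0 ≤ ∑ i : Fin (n + 1),
      min (dist (p i).1.1 (p (i + 1)).1.2 - γ * dist (p i).1.1 (p i).1.2)
          (dist (p i).1.2 (p (i + 1)).1.2)

/-- `A ⊆ M̃` is cyclically monotonic. -/
def CyclMono (A : Set (Mt M)) : Prop :=
  ∀ (n : ℕ) (p : Fin (n + 1) → Mt M), (∀ i, p i ∈ A) →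
    ∑ i : Fin (n + 1), dist (p i).1.1 (p i).1.2 ≤
      ∑ i : Fin (n + 1), dist (p i).1.1 (p (i + 1)).1.2

/-- `π(A)`. -/
def piA (A : Set (Mt M)) : Set M := {z | ∃ p ∈ A, p.1.1 = z ∨ p.1.2 = z}

/-- The pair `(u,v)` as an element of `M̃`. -/
def pr {M : Type*} (u v : M) (h : u ≠ v) : Mt M := ⟨(u, v), h⟩

theorem stmt5 (base : M) (Λ : ellInfty M →L[ℝ] ℝ) (hΛ : IsPositive Λ)
    (hopt : ‖Λ.comp (LipO M base).subtypeL‖ = 1) (hnorm : ‖Λ‖ = 1)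
    (α : ℝ) (hα : 0 < α) (f : ↥(LipO M base)) (hf1 : ‖f‖ ≤ 1)
    (hfs : 1 - α ^ 2 < Λ.comp (LipO M base).subtypeL f) :
    1 - α ≤ Λ (indicLp {p : Mt M | 1 - α ≤ ((f : ellInfty M) : Mt M → ℝ) p}) := by
  set A : Set (Mt M) := {p : Mt M | 1 - α ≤ ((f : ellInfty M) : Mt M → ℝ) p} with hA
  -- pointwise bound on f
  have hfnorm : ‖(f : ellInfty M)‖ ≤ 1 := hf1
  have hfpt : ∀ p : Mt M, ((f : ellInfty M) : Mt M → ℝ) p ≤ 1 := fun p =>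
    le_trans (le_abs_self _)
      (le_trans (lp.norm_apply_le_norm ENNReal.top_ne_zero (f : ellInfty M) p) hfnorm)
  by_cases h1 : 1 ≤ α
  · -- then 1 - α ≤ 0 ≤ Λ(1_A)
    have h0 : (0 : ℝ) ≤ Λ (indicLp A) := by
      apply hΛ
      intro p
      show 0 ≤ A.indicator 1 p
      by_cases hp : p ∈ A <;> simp [Set.indicator_apply, hp]
    linarith
  push_neg at h1
  -- g := α • 1_A + (1-α) • 1 - f ≥ 0 pointwise
  set g : ellInfty M :=
    α • indicLp A + (1 - α) • indicLp (Set.univ : Set (Mt M)) - (f : ellInfty M) with hg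
  have hgpt : ∀ p : Mt M, 0 ≤ g p := by
    intro p
    have hco : g p = α * (indicLp A) p + (1 - α) * (indicLp (Set.univ : Set (Mt M))) p
        - ((f : ellInfty M) : Mt M → ℝ) p := by
      have h1' := lp.coeFn_sub (α • indicLp A + (1 - α) • indicLp (Set.univ : Set (Mt M)))
        (f : ellInfty M)
      have h2' := lp.coeFn_add (α • indicLp A) ((1 - α) • indicLp (Set.univ : Set (Mt M)))
      have h3' := lp.coeFn_smul α (indicLp (M := M) A)
      have h4' := lp.coeFn_smul (1 - α) (indicLp (Set.univ : Set (Mt M)))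
      rw [hg, h1', Pi.sub_apply, h2', Pi.add_apply, h3', h4']
      simp
    rw [hco]
    have huniv : (indicLp (Set.univ : Set (Mt M))) p = 1 := by
      show Set.indicator Set.univ 1 p = 1
      simp
    rw [huniv, mul_one]
    by_cases hp : p ∈ A
    · have hAp : (indicLp A) p = 1 := by
        show Set.indicator A 1 p = 1
        simp [hp]
      rw [hAp, mul_one]
      have := hfpt p
      linarith
    · have hAp : (indicLp A) p = 0 := by
        show Set.indicator A 1 p = 0
        simp [hp]
      rw [hAp, mul_zero]
      have : ((f : ellInfty M) : Mt M → ℝ) p < 1 - α := by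
        by_contra hle
        exact hp (le_of_not_gt hle)
      linarith
  have hΛg : 0 ≤ Λ g := hΛ g hgpt
  have hexp : Λ g = α * Λ (indicLp A) + (1 - α) * Λ (indicLp (Set.univ : Set (Mt M)))
      - Λ (f : ellInfty M) := by
    rw [hg]
    simp [map_sub, map_add, map_smul, smul_eq_mul]
  -- Λ(1_univ) ≤ 1
  have hΛ1 : Λ (indicLp (Set.univ : Set (Mt M))) ≤ 1 := by
    have hn : ‖indicLp (Set.univ : Set (Mt M))‖ ≤ 1 := by
      apply lp.norm_le_of_forall_le zero_le_one
      intro p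
      show ‖Set.indicator Set.univ (1 : Mt M → ℝ) p‖ ≤ 1
      simp
    calc Λ (indicLp (Set.univ : Set (Mt M)))
        ≤ ‖Λ (indicLp (Set.univ : Set (Mt M)))‖ := le_abs_self _
      _ ≤ ‖Λ‖ * ‖indicLp (Set.univ : Set (Mt M))‖ := Λ.le_opNorm _
      _ ≤ 1 * 1 := by rw [hnorm]; exact mul_le_mul_of_nonneg_left hn zero_le_one
      _ = 1 := one_mul 1
  have hΛf : Λ (f : ellInfty M) = Λ.comp (LipO M base).subtypeL f := rfl
  have key : 1 - α ^ 2 < α * Λ (indicLp A) + (1 - α) := by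
    have h1α : (0 : ℝ) ≤ 1 - α := by linarith
    have : (1 - α) * Λ (indicLp (Set.univ : Set (Mt M))) ≤ 1 - α := by
      nlinarith
    nlinarith [hfs, hΛg, hexp, hΛf]
  have : α * (1 - α) < α * Λ (indicLp A) := by nlinarith
  have := (mul_lt_mul_iff_right₀ hα).mp this
  linarith
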